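/- Let D be a bipartite tournament with bipartition (V_1,V_2) and sink elimination index \zeta(D) >= 1. Then the union of the even-indexed sets W_0, W_2, ... of the sink sequence is contained in one partite set and the union of the odd-indexed sets W_1, W_3, ... is contained in the other partite set. -/

import Mathlib

/-- `walkN D n u v` : there is a directed walk of length `n` from `u` to `v` in the digraph `D`. -/
def walkN {V : Type*} (D : V → V → Prop) : ℕ → V → V → Prop
  | 0 => fun u v => u = v
  | n+1 => fun u v => ∃ w, D u w ∧ walkN D n w v

/-- The `m`-step competition graph of the digraph `D`. -/
def cmGraph {V : Type*} (D : V → V → Prop) (m : ℕ) : SimpleGraph V where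
  Adj u v := u ≠ v ∧ ∃ z, walkN D m u z ∧ walkN D m v z
  symm := by
    constructor
    intro u v h
    exact ⟨Ne.symm h.1, h.2.imp fun z hz => ⟨hz.2, hz.1⟩⟩
  loopless := by constructor; intro v h; exact h.1 rfl

/-- Sinks of the subdigraph of `D` induced by `S`. -/
def sinks {V : Type*} (D : V → V → Prop) (S : Set V) : Set V :=
  {v ∈ S | ∀ w ∈ S, ¬ D v w}

/-- The digraph sequence `D_0, D_1, …` (as vertex sets) associated with the sink sequence. -/
def Dseq {V : Type*} (D : V → V → Prop) : ℕ → Set V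
  | 0 => Set.univ
  | n+1 => Dseq D n \ sinks D (Dseq D n)

/-- The sink sequence `W_0, W_1, …` of `D`. -/
def Wseq {V : Type*} (D : V → V → Prop) (n : ℕ) : Set V := sinks D (Dseq D n)

/-- `k` is the sink elimination index `ζ(D)`. -/
def IsSinkElimIndex {V : Type*} (D : V → V → Prop) (k : ℕ) : Prop :=
  (Wseq D k = Dseq D k ∨ Wseq D k = ∅) ∧
  ∀ j < k, Wseq D j ≠ Dseq D j ∧ Wseq D j ≠ ∅

/-- A digraph is acyclic iff it has no directed closed walk of positive length. -/
def DigraphAcyclic {V : Type*} (D : V → V → Prop) : Prop :=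
  ∀ v : V, ∀ n : ℕ, 0 < n → ¬ walkN D n v v

/-- `D` is a bipartite tournament with bipartition `(V1, V2)`. -/
structure IsBipartiteTournament {V : Type*} (D : V → V → Prop) (V1 V2 : Set V) : Prop where
  nonempty1 : V1.Nonempty
  nonempty2 : V2.Nonempty
  union_eq : V1 ∪ V2 = Set.univ
  disj : V1 ∩ V2 = ∅
  oriented : ∀ x ∈ V1, ∀ y ∈ V2, Xor' (D x y) (D y x)
  no_intra : ∀ x y, D x y → (x ∈ V1 ∧ y ∈ V2) ∨ (x ∈ V2 ∧ y ∈ V1)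

/-- The competition graph sequence of `D` is eventually equal, starting from `q`. -/
def PeriodicFrom {V : Type*} (D : V → V → Prop) (q : ℕ) : Prop :=
  ∃ r, 0 < r ∧ ∀ i : ℕ, cmGraph D (q + i) = cmGraph D (q + r + i)

/-- `q` is the competition index of `D`. -/
def IsCindex {V : Type*} (D : V → V → Prop) (q : ℕ) : Prop :=
  0 < q ∧ PeriodicFrom D q ∧ ∀ q', 0 < q' → PeriodicFrom D q' → q ≤ q'

/-- `p` is the competition period of `D`, given that `q` is its competition index. -/
def IsCperiod {V : Type*} (D : V → V → Prop) (q p : ℕ) : Prop :=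
  0 < p ∧ cmGraph D q = cmGraph D (q + p) ∧
    ∀ p', 0 < p' → cmGraph D q = cmGraph D (q + p') → p ≤ p'


lemma walt_lemma {V : Type*} (D : V → V → Prop) (A B : Set V)
    (hcross : ∀ x y, D x y → (x ∈ A ∧ y ∈ B) ∨ (x ∈ B ∧ y ∈ A))
    (hdisj : A ∩ B = ∅) (i : ℕ) (hW : Wseq D i ⊆ A) :
    Wseq D (i+1) ⊆ B := by
  intro v hv
  obtain ⟨⟨hvDi, hvW⟩, hsink⟩ := hv
  have hnot : ¬ ∀ w ∈ Dseq D i, ¬ D v w := fun h => hvW ⟨hvDi, h⟩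
  push_neg at hnot
  obtain ⟨w, hwDi, hvw⟩ := hnot
  rcases hcross v w hvw with ⟨_, hwB⟩ | ⟨hvB, _⟩
  · have hwW : w ∉ Wseq D i := fun h =>
      Set.eq_empty_iff_forall_notMem.mp hdisj w ⟨hW h, hwB⟩
    exact absurd hvw (hsink w ⟨hwDi, hwW⟩)
  · exact hvB

lemma wbase_lemma {V : Type*} (D : V → V → Prop) (V1 V2 : Set V)
    (hD : IsBipartiteTournament D V1 V2) :
    Wseq D 0 ⊆ V1 ∨ Wseq D 0 ⊆ V2 := by
  by_contra h
  push_neg at h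
  obtain ⟨h1, h2⟩ := h
  obtain ⟨x, hxW, hx1⟩ := Set.not_subset.mp h1
  obtain ⟨y, hyW, hy2⟩ := Set.not_subset.mp h2
  have hx2 : x ∈ V2 := by
    have := hD.union_eq ▸ Set.mem_univ x
    rcases (hD.union_eq ▸ Set.mem_univ x : x ∈ V1 ∪ V2) with h | h
    · exact absurd h hx1
    · exact h
  have hy1 : y ∈ V1 := by
    rcases (hD.union_eq ▸ Set.mem_univ y : y ∈ V1 ∪ V2) with h | h
    · exact h
    · exact absurd h hy2
  have hxs : ∀ w ∈ Dseq D 0, ¬ D x w := hxW.2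
  have hys : ∀ w ∈ Dseq D 0, ¬ D y w := hyW.2
  rcases hD.oriented y hy1 x hx2 with ⟨h, _⟩ | ⟨h, _⟩
  · exact hys x (Set.mem_univ x) h
  · exact hxs y (Set.mem_univ y) h

lemma wind_lemma {V : Type*} (D : V → V → Prop) (V1 V2 : Set V)
    (hD : IsBipartiteTournament D V1 V2) (h0 : Wseq D 0 ⊆ V1) :
    ∀ i, (Even i → Wseq D i ⊆ V1) ∧ (Odd i → Wseq D i ⊆ V2) := by
  have hdisj' : V2 ∩ V1 = ∅ := by rw [Set.inter_comm]; exact hD.disj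
  have hcross' : ∀ x y, D x y → (x ∈ V2 ∧ y ∈ V1) ∨ (x ∈ V1 ∧ y ∈ V2) :=
    fun x y h => (hD.no_intra x y h).symm
  intro i
  induction i with
  | zero => exact ⟨fun _ => h0, fun ho => absurd ho (by simp)⟩
  | succ n ih =>
    constructor
    · intro he
      have hodd : Odd n := by
        rcases Nat.even_or_odd n with h | h
        · exact absurd (by simpa using h) (Nat.even_add_one.mp he)
        · exact h
      exact walt_lemma D V2 V1 hcross' hdisj' n (ih.2 hodd)
    · intro ho
      have heven : Even n := by
        rcases Nat.even_or_odd n with h | h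
        · exact h
        · exact absurd (Nat.even_add_one.mpr (Nat.not_even_iff_odd.mpr h)) (Nat.not_even_iff_odd.mpr ho)
      exact walt_lemma D V1 V2 hD.no_intra hD.disj n (ih.1 heven)

/-- For a bipartite tournament with `ζ(D) ≥ 1`, the even-indexed sink-sequence
sets all lie in one partite set and the odd-indexed ones in the other. -/
theorem sink_sequence_alternates {V : Type*} [Fintype V] (D : V → V → Prop)
    (V1 V2 : Set V) (hD : IsBipartiteTournament D V1 V2)
    (k : ℕ) (hk : IsSinkElimIndex D k) (hk1 : 1 ≤ k) :
    (∀ i ≤ k, (Even i → Wseq D i ⊆ V1) ∧ (Odd i → Wseq D i ⊆ V2)) ∨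
    (∀ i ≤ k, (Even i → Wseq D i ⊆ V2) ∧ (Odd i → Wseq D i ⊆ V1)) := by
  rcases wbase_lemma D V1 V2 hD with h0 | h0
  · exact Or.inl fun i _ => wind_lemma D V1 V2 hD h0 i
  · refine Or.inr fun i _ => ?_
    have hD' : IsBipartiteTournament D V2 V1 :=
      { nonempty1 := hD.nonempty2, nonempty2 := hD.nonempty1,
        union_eq := by rw [Set.union_comm]; exact hD.union_eq,
        disj := by rw [Set.inter_comm]; exact hD.disj,
        oriented := fun x hx y hy => (hD.oriented y hy x hx).symm,
        no_intra := fun x y h => (hD.no_intra x y h).symm }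
    exact wind_lemma D V2 V1 hD' h0 i
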